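/- Let $X \subseteq \mathbb{R}$ be a closed set with empty interior, and define $X' = \{x \in X : x \text{ is not isolated in } X\}$ (the Cantor–Bendixson derivative). If $X$ is a union of $n+1$ discrete sets, then $X'$ is a union of $n$ discrete sets. -/

import Mathlib

open Set Filter

/-- Iterated Cantor–Bendixson derivative. -/
private def CBiter (X : Set ℝ) : ℕ → Set ℝ
  | 0 => X
  | k+1 => {x ∈ CBiter X k | AccPt x (Filter.principal (CBiter X k))}

private lemma CBiter_succ_subset (X : Set ℝ) (k : ℕ) : CBiter X (k+1) ⊆ CBiter X k :=
  fun _ hx => hx.1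

private lemma CBiter_anti (X : Set ℝ) : Antitone (CBiter X) :=
  antitone_nat_of_succ_le (fun k => CBiter_succ_subset X k)

private lemma CBiter_subset (X : Set ℝ) : ∀ k, CBiter X k ⊆ X
  | 0 => subset_rfl
  | k+1 => (CBiter_succ_subset X k).trans (CBiter_subset X k)

/-- Key descent lemma: if `y ∈ CBiter X k` lies in an open set `V` disjoint from the
sets `D i`, `i ∈ T`, then `T.card + k ≤ n`. -/
private lemma CBiter_card_bound (n : ℕ) (D : Fin (n+1) → Set ℝ) (X : Set ℝ)
    (hD : X = ⋃ i, D i)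
    (hdisc : ∀ i, ∀ x ∈ D i, ∃ U : Set ℝ, IsOpen U ∧ U ∩ D i = {x}) :
    ∀ k (y : ℝ) (V : Set ℝ), IsOpen V → y ∈ V → y ∈ CBiter X k →
      ∀ T : Finset (Fin (n+1)), (∀ i ∈ T, V ∩ D i = ∅) → T.card + k ≤ n := by
  intro k
  induction k with
  | zero =>
    intro y V hV hyV hy T hT
    have hyX : y ∈ X := hy
    rw [hD] at hyX
    obtain ⟨i, hi⟩ := Set.mem_iUnion.1 hyX
    have hiT : i ∉ T := by
      intro h
      have := hT i h
      exact absurd (Set.mem_inter hyV hi) (by simp [this])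
    have hTne : T ≠ Finset.univ := by
      intro h
      exact hiT (h ▸ Finset.mem_univ i)
    have : T.card < (Finset.univ : Finset (Fin (n+1))).card :=
      Finset.card_lt_card (Finset.ssubset_univ_iff.2 hTne)
    simp only [Finset.card_univ, Fintype.card_fin] at this
    omega
  | succ k ih =>
    intro y V hV hyV hy T hT
    have hyX : y ∈ X := CBiter_subset X (k+1) hy
    rw [hD] at hyX
    obtain ⟨i, hi⟩ := Set.mem_iUnion.1 hyX
    have hiT : i ∉ T := by
      intro h
      have := hT i h
      exact absurd (Set.mem_inter hyV hi) (by simp [this])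
    obtain ⟨U, hU, hUD⟩ := hdisc i y hi
    have hyU : y ∈ U := by
      have : y ∈ U ∩ D i := by rw [hUD]; exact rfl
      exact this.1
    have hacc : AccPt y (Filter.principal (CBiter X k)) := hy.2
    have hnb : V ∩ U ∈ nhds y := (hV.inter hU).mem_nhds ⟨hyV, hyU⟩
    obtain ⟨z, hz, hzy⟩ := (accPt_iff_nhds.1 hacc) (V ∩ U) hnb
    have hV' : IsOpen ((V ∩ U) \ {y}) := (hV.inter hU).sdiff isClosed_singleton
    have hzV' : z ∈ (V ∩ U) \ {y} := ⟨hz.1, by simpa using hzy⟩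
    have hstep := ih z ((V ∩ U) \ {y}) hV' hzV' hz.2 (insert i T) (by
      intro j hj
      rcases Finset.mem_insert.1 hj with rfl | hjT
      · apply Set.eq_empty_iff_forall_notMem.2
        intro w hw
        have hwy : w = y := by
          have : w ∈ U ∩ D j := ⟨hw.1.1.2, hw.2⟩
          rw [hUD] at this
          exact this
        exact hw.1.2 (by simp [hwy])
      · apply Set.eq_empty_iff_forall_notMem.2
        intro w hw
        have : w ∈ V ∩ D j := ⟨hw.1.1.1, hw.2⟩
        rw [hT j hjT] at this
        exact this)
    rw [Finset.card_insert_of_notMem hiT] at hstep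
    omega

theorem stmt_12 (X : Set ℝ) (hcl : IsClosed X) (hint : interior X = ∅)
    (n : ℕ) (D : Fin (n + 1) → Set ℝ) (hD : X = ⋃ i, D i)
    (hdisc : ∀ i, ∀ x ∈ D i, ∃ U : Set ℝ, IsOpen U ∧ U ∩ D i = {x}) :
    ∃ E : Fin n → Set ℝ,
      {x ∈ X | AccPt x (Filter.principal X)} = ⋃ i, E i ∧
      ∀ i, ∀ x ∈ E i, ∃ U : Set ℝ, IsOpen U ∧ U ∩ E i = {x} := by
  classical
  refine ⟨fun i => CBiter X ((i : ℕ) + 1) \ CBiter X ((i : ℕ) + 2), ?_, ?_⟩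
  · apply Set.Subset.antisymm
    · intro x hx
      have hx1 : x ∈ CBiter X 1 := ⟨hx.1, hx.2⟩
      have hempty : x ∉ CBiter X (n+1) := by
        intro h
        have := CBiter_card_bound n D X hD hdisc (n+1) x Set.univ isOpen_univ
          (Set.mem_univ x) h ∅ (by simp)
        omega
      have hex : ∃ r, x ∉ CBiter X (r+1) := ⟨n, hempty⟩
      set r := Nat.find hex with hrdef
      have hr : x ∉ CBiter X (r+1) := Nat.find_spec hex
      have hrn : r ≤ n := Nat.find_min' hex hempty
      have hr0 : r ≠ 0 := by
        intro h
        rw [h] at hr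
        exact hr hx1
      have hxr : x ∈ CBiter X r := by
        have hmin := Nat.find_min hex (show r - 1 < r by omega)
        have : ¬ x ∉ CBiter X ((r-1)+1) := hmin
        push_neg at this
        have e1 : r - 1 + 1 = r := by omega
        rwa [e1] at this
      apply Set.mem_iUnion.2
      refine ⟨⟨r - 1, by omega⟩, ?_, ?_⟩
      · have e1 : r - 1 + 1 = r := by omega
        show x ∈ CBiter X ((r-1) + 1)
        rwa [e1]
      · have e2 : r - 1 + 2 = r + 1 := by omega
        show x ∉ CBiter X ((r-1) + 2)
        rwa [e2]
    · intro x hx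
      obtain ⟨i, hi⟩ := Set.mem_iUnion.1 hx
      have : x ∈ CBiter X 1 := CBiter_anti X (show 1 ≤ (i : ℕ) + 1 by omega) hi.1
      exact ⟨this.1, this.2⟩
  · intro i x hx
    obtain ⟨hx1, hx2⟩ := hx
    have hnacc : ¬ AccPt x (Filter.principal (CBiter X ((i : ℕ)+1))) := by
      intro h
      exact hx2 ⟨hx1, h⟩
    rw [accPt_iff_nhds] at hnacc
    push_neg at hnacc
    obtain ⟨U, hU, hU2⟩ := hnacc
    obtain ⟨V, hVU, hVopen, hxV⟩ := mem_nhds_iff.1 hU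
    refine ⟨V, hVopen, ?_⟩
    apply Set.Subset.antisymm
    · intro y hy
      exact hU2 y ⟨hVU hy.1, hy.2.1⟩
    · intro y hy
      rw [Set.mem_singleton_iff] at hy
      subst hy
      exact ⟨hxV, hx1, hx2⟩
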